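/- Let n ≥ 1 and let A be a real symmetric (n+1)×(n+1) matrix, written in block form with upper-left n×n block A₁, last column vector b (so b i = A i n for i < n), last row bᵀ, and lower-right entry d = A n n with d < 0. Let D be the n×n Schur complement, D i j = A₁ i j − (b i * b j)/d. Then A is Hurwitz (every complex eigenvalue of A has negative real part) if and only if D is Hurwitz. (Note D is again symmetric.) -/

import Mathlib

open Matrix

/-- A real square matrix is Hurwitz if every eigenvalue of its complexification
has negative real part. -/
def IsHurwitz {n : ℕ} (M : Matrix (Fin n) (Fin n) ℝ) : Prop :=
  ∀ μ ∈ spectrum ℂ (M.map (fun x => (x : ℂ))), μ.re < 0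

theorem aux_spec_eq {m : ℕ} (M : Matrix (Fin m) (Fin m) ℝ) (hM : M.IsHermitian) :
    spectrum ℂ (M.map (fun x => (x : ℂ))) =
      Set.range (fun i => (hM.eigenvalues i : ℂ)) := by
  have hspec := hM.spectral_theorem
  set U : Matrix (Fin m) (Fin m) ℝ := (hM.eigenvectorUnitary : Matrix (Fin m) (Fin m) ℝ) with hU
  have h1 : U * star U = 1 := (Matrix.mem_unitaryGroup_iff).mp hM.eigenvectorUnitary.2
  have h2 : star U * U = 1 := (Matrix.mem_unitaryGroup_iff').mp hM.eigenvectorUnitary.2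
  let φ : Matrix (Fin m) (Fin m) ℝ →+* Matrix (Fin m) (Fin m) ℂ :=
    (algebraMap ℝ ℂ).mapMatrix
  have hφ : ∀ N : Matrix (Fin m) (Fin m) ℝ, φ N = N.map (fun x => (x : ℂ)) := fun N => rfl
  have hu1 : φ U * φ (star U) = 1 := by rw [← _root_.map_mul, h1, _root_.map_one]
  have hu2 : φ (star U) * φ U = 1 := by rw [← _root_.map_mul, h2, _root_.map_one]
  let u : (Matrix (Fin m) (Fin m) ℂ)ˣ := ⟨φ U, φ (star U), hu1, hu2⟩
  have key : M.map (fun x => (x : ℂ)) =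
      (u : Matrix (Fin m) (Fin m) ℂ) * (diagonal (fun i => (hM.eigenvalues i : ℂ))) *
        ((u⁻¹ : (Matrix (Fin m) (Fin m) ℂ)ˣ) : Matrix (Fin m) (Fin m) ℂ) := by
    rw [← hφ]
    conv_lhs => rw [hspec]
    rw [Unitary.conjStarAlgAut_apply, _root_.map_mul, _root_.map_mul]
    congr 1
    · congr 1
      rw [hφ]
      rw [Matrix.diagonal_map (by simp)]
      congr 1
  rw [key, spectrum.units_conjugate, spectrum_diagonal]

theorem aux_posdef_of_psd_det {k : Type*} [Fintype k] [DecidableEq k] {M : Matrix k k ℝ}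
    (hsd : M.PosSemidef) (hdet : M.det ≠ 0) : M.PosDef := by
  refine Matrix.PosDef.of_dotProduct_mulVec_pos hsd.1 fun x hx => ?_
  have hMx : M *ᵥ x ≠ 0 := by
    have : Function.Injective (M.mulVec) :=
      Matrix.mulVec_injective_iff_isUnit.mpr ((Matrix.isUnit_iff_isUnit_det M).mpr hdet.isUnit)
    intro h0
    exact hx (this (by simpa using h0))
  have hne : star x ⬝ᵥ M *ᵥ x ≠ 0 := fun h0 => hMx ((hsd.dotProduct_mulVec_zero_iff x).mp h0)
  exact lt_of_le_of_ne ((posSemidef_iff_dotProduct_mulVec.mp hsd).2 x) (Ne.symm hne)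

theorem aux_posdef_iff_spec {m : ℕ} (M : Matrix (Fin m) (Fin m) ℝ) (hM : M.IsHermitian) :
    M.PosDef ↔ ∀ μ ∈ spectrum ℂ (M.map (fun x => (x : ℂ))), 0 < μ.re := by
  rw [aux_spec_eq M hM]
  constructor
  · rintro h μ ⟨i, rfl⟩
    simpa using h.eigenvalues_pos i
  · intro h
    have hev : ∀ i, 0 < hM.eigenvalues i := by
      intro i
      simpa using h _ ⟨i, rfl⟩
    have hsd : M.PosSemidef := hM.posSemidef_iff_eigenvalues_nonneg.mpr fun i => (hev i).le
    have hdet : M.det ≠ 0 := by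
      rw [hM.det_eq_prod_eigenvalues]
      exact (Finset.prod_pos fun i _ => hev i).ne'
    exact aux_posdef_of_psd_det hsd hdet

theorem aux_hurwitz_iff_neg_posdef {m : ℕ} (M : Matrix (Fin m) (Fin m) ℝ) (hM : M.IsSymm) :
    IsHurwitz M ↔ (-M).PosDef := by
  have hMh : (-M).IsHermitian := by
    ext i j
    simp [Matrix.conjTranspose_apply, hM.apply i j]
  rw [aux_posdef_iff_spec _ hMh]
  have hmap : (-M).map (fun x => (x : ℂ)) = -(M.map (fun x => (x : ℂ))) := by
    ext i j; simp
  rw [hmap]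
  have hneg : ∀ μ : ℂ, μ ∈ spectrum ℂ (-(M.map (fun x => (x : ℂ)))) ↔
      -μ ∈ spectrum ℂ (M.map (fun x => (x : ℂ))) := by
    intro μ
    rw [spectrum.mem_iff, spectrum.mem_iff]
    rw [show (algebraMap ℂ _) (-μ) - M.map (fun x => (x : ℂ)) =
      -((algebraMap ℂ _) μ - (-(M.map (fun x => (x : ℂ))))) by rw [map_neg]; abel,
      IsUnit.neg_iff]
  constructor
  · intro h μ hμ
    have := h (-μ) ((hneg μ).mp hμ)
    simpa using this
  · intro h μ hμ
    have := h (-μ) ((hneg (-μ)).mpr (by simpa using hμ))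
    simpa using this

theorem aux_posDef_submatrix {k l : Type*} [Fintype k] [DecidableEq k] [Fintype l]
    [DecidableEq l] {M : Matrix l l ℝ} (hM : M.PosDef) (e : k ≃ l) :
    (M.submatrix e e).PosDef := by
  refine Matrix.PosDef.of_dotProduct_mulVec_pos ((isHermitian_submatrix_equiv e).mpr hM.1) fun x hx => ?_
  have hy : (x ∘ e.symm) ≠ 0 := by
    intro h0
    apply hx
    ext i
    simpa using congrFun h0 (e i)
  have hpos := hM.dotProduct_mulVec_pos hy
  rw [Matrix.submatrix_mulVec_equiv]
  calc (0:ℝ) < star (x ∘ e.symm) ⬝ᵥ (M *ᵥ (x ∘ e.symm)) := hpos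
    _ = star x ⬝ᵥ ((M *ᵥ (x ∘ e.symm)) ∘ e) := by
        rw [dotProduct, dotProduct]
        exact (Fintype.sum_equiv e _ _ (fun i => by simp)).symm

theorem aux_posDef_submatrix_equiv {k l : Type*} [Fintype k] [DecidableEq k] [Fintype l]
    [DecidableEq l] (M : Matrix l l ℝ) (e : k ≃ l) :
    (M.submatrix e e).PosDef ↔ M.PosDef := by
  constructor
  · intro h
    have := aux_posDef_submatrix h e.symm
    simpa [Matrix.submatrix_submatrix] using this
  · exact fun h => aux_posDef_submatrix h e

theorem aux_schur_posdef (n : ℕ)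
    (A : Matrix (Fin (n + 1)) (Fin (n + 1)) ℝ)
    (hsymm : A.IsSymm)
    (hd : A (Fin.last n) (Fin.last n) < 0)
    (D : Matrix (Fin n) (Fin n) ℝ)
    (hD : ∀ i j : Fin n,
      D i j = A i.castSucc j.castSucc -
        (A i.castSucc (Fin.last n) * A j.castSucc (Fin.last n)) /
          A (Fin.last n) (Fin.last n)) :
    (-A).PosDef ↔ (-D).PosDef := by
  set d : ℝ := A (Fin.last n) (Fin.last n) with hdd
  set X : Matrix (Fin n) (Fin n) ℝ := of fun i j => -A i.castSucc j.castSucc with hX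
  set B : Matrix (Fin n) (Fin 1) ℝ := of fun i _ => -A i.castSucc (Fin.last n) with hB
  set d' : Matrix (Fin 1) (Fin 1) ℝ := diagonal (fun _ => -d) with hd'
  have he_r : ∀ j : Fin 1, (finSumFinEquiv (Sum.inr j) : Fin (n+1)) = Fin.last n := by
    intro j; ext; simp [Fin.val_eq_zero]
  have hblock : (-A).submatrix finSumFinEquiv finSumFinEquiv = fromBlocks X B Bᴴ d' := by
    ext i j
    rcases i with i | i <;> rcases j with j | j
    · rfl
    · rw [submatrix_apply, he_r]; rfl
    · rw [submatrix_apply, he_r, fromBlocks_apply₂₁]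
      simp [hB]
      exact hsymm.apply _ _
    · rw [submatrix_apply, he_r, he_r, fromBlocks_apply₂₂]
      rw [Fin.eq_zero i, Fin.eq_zero j]
      simp [hd']
      rfl
  have hd'pos : d'.PosDef := by
    rw [hd', posDef_diagonal_iff]
    intro i; simpa using hd
  haveI : Invertible d' := hd'pos.isUnit.invertible
  have hschur : X - B * d'⁻¹ * Bᴴ = -D := by
    have hdne' : (-d) ≠ 0 := neg_ne_zero.mpr hd.ne
    have hdinv : d'⁻¹ = diagonal (fun _ : Fin 1 => (-d)⁻¹) := by
      refine Matrix.inv_eq_right_inv ?_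
      rw [hd', diagonal_mul_diagonal]
      simp [mul_inv_cancel₀ hdne']
      funext i
      exact mul_inv_cancel₀ hd.ne
    ext i j
    rw [hdinv]
    simp only [Matrix.sub_apply, hX, of_apply, mul_apply, Fin.sum_univ_one, diagonal_apply_eq,
      conjTranspose_apply, hB, star_trivial, Matrix.neg_apply, hD i j]
    have hdne : d ≠ 0 := hd.ne
    field_simp
    ring
  have hdet : (fromBlocks X B Bᴴ d').det = d'.det * (-D).det := by
    rw [Matrix.det_fromBlocks₂₂, Matrix.invOf_eq_nonsing_inv, hschur]
  have hd'det : d'.det ≠ 0 := hd'pos.det_pos.ne'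
  have hAh : (-A).IsHermitian := by
    ext i j; simp [conjTranspose_apply, hsymm.apply]
  have hDh : (-D).IsHermitian := by
    ext i j
    simp only [conjTranspose_apply, Matrix.neg_apply, star_trivial, hD i j, hD j i,
      hsymm.apply i.castSucc j.castSucc]
    ring
  have hblkh : (fromBlocks X B Bᴴ d').IsHermitian := by
    rw [← hblock]
    exact (isHermitian_submatrix_equiv finSumFinEquiv).mpr hAh
  constructor
  · intro h
    have h1 : (fromBlocks X B Bᴴ d').PosDef := by
      rw [← hblock]; exact aux_posDef_submatrix h finSumFinEquiv
    have h2 : (-D).PosSemidef := by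
      rw [← hschur]
      exact (Matrix.PosDef.fromBlocks₂₂ X B hd'pos).mp h1.posSemidef
    refine aux_posdef_of_psd_det h2 ?_
    have := h1.det_pos.ne'
    rw [hdet] at this
    exact fun h0 => this (by rw [h0, mul_zero])
  · intro h
    have h1 : (fromBlocks X B Bᴴ d').PosSemidef := by
      refine (Matrix.PosDef.fromBlocks₂₂ X B hd'pos).mpr ?_
      rw [hschur]; exact h.posSemidef
    have h2 : (fromBlocks X B Bᴴ d').PosDef := by
      refine aux_posdef_of_psd_det h1 ?_
      rw [hdet]; exact mul_ne_zero hd'det h.det_pos.ne'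
    rw [← aux_posDef_submatrix_equiv _ finSumFinEquiv, hblock]
    exact h2

theorem schur_complement_hurwitz_symmetric
    (n : ℕ) (hn : 1 ≤ n)
    (A : Matrix (Fin (n + 1)) (Fin (n + 1)) ℝ)
    (hsymm : A.IsSymm)
    (hd : A (Fin.last n) (Fin.last n) < 0)
    (D : Matrix (Fin n) (Fin n) ℝ)
    (hD : ∀ i j : Fin n,
      D i j = A i.castSucc j.castSucc -
        (A i.castSucc (Fin.last n) * A j.castSucc (Fin.last n)) /
          A (Fin.last n) (Fin.last n)) :
    IsHurwitz A ↔ IsHurwitz D := by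
  have hDsymm : D.IsSymm := by
    ext i j
    simp only [transpose_apply, hD i j, hD j i, hsymm.apply i.castSucc j.castSucc]
    ring
  rw [aux_hurwitz_iff_neg_posdef A hsymm, aux_hurwitz_iff_neg_posdef D hDsymm]
  exact aux_schur_posdef n A hsymm hd D hD
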